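/- The modulus of the theta function is invariant under the element ρ₂ = (n₁; (s, 0)) with s = (½,…,½): for every measurable f : ℝ^k → ℂ with κ_η(f) < ∞ for some η > k, every z ∈ ℍ, φ ∈ ℝ, and ξ₁, ξ₂ ∈ ℝ^k, one has |Θ_f(z + 1, φ; (ξ₁ + ξ₂ + s, ξ₂))| = |Θ_f(z, φ; (ξ₁, ξ₂))|, where s ∈ ℝ^k is the vector all of whose entries equal ½. -/

import Mathlib

open scoped RealInnerProductSpace
open MeasureTheory
open scoped ENNReal Classical

/-- ℝ^k as a Euclidean space. -/
abbrev E (k : ℕ) := EuclideanSpace ℝ (Fin k)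

/-- `e(t) = exp(2πit)`. -/
noncomputable def e (t : ℝ) : ℂ := Complex.exp (2 * Real.pi * Complex.I * t)

/-- `f_φ := R(k_φ)f`: equal to `f` when `φ ≡ 0 (mod 2π)`, to `w ↦ f(−w)` when
`φ ≡ π (mod 2π)`, and given by the oscillatory integral otherwise. -/
noncomputable def fphi {k : ℕ} (f : E k → ℂ) (φ : ℝ) : E k → ℂ :=
  fun w =>
    if ∃ m : ℤ, φ = 2 * Real.pi * m then f w
    else if ∃ m : ℤ, φ = Real.pi + 2 * Real.pi * m then f (-w)
    else ((|Real.sin φ| ^ (-(k : ℝ) / 2) : ℝ) : ℂ) *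
      ∫ v : E k,
        e (((1 / 2) * (‖w‖ ^ 2 + ‖v‖ ^ 2) * Real.cos φ - ⟪w, v⟫) / Real.sin φ) * f v

/-- `κ_η(f) = sup_{w,φ} (1+‖w‖²)^{η/2} |f_φ(w)|` (valued in `ℝ≥0∞`). -/
noncomputable def kappa {k : ℕ} (η : ℝ) (f : E k → ℂ) : ℝ≥0∞ :=
  ⨆ (w : E k) (φ : ℝ),
    ENNReal.ofReal ((1 + ‖w‖ ^ 2) ^ (η / 2) * ‖fphi f φ w‖)

/-- The lattice point `n ∈ ℤ^k` viewed as a vector in ℝ^k. -/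
noncomputable def intVec {k : ℕ} (n : Fin k → ℤ) : E k :=
  (EuclideanSpace.equiv (Fin k) ℝ).symm (fun i => (n i : ℝ))

/-- The Jacobi theta function
`Θ_f(z, φ; ξ) = y^{k/4} Σ_{n ∈ ℤ^k} f_φ((n − ξ₂)√y) e(½‖n − ξ₂‖² x + n·ξ₁)`,
where `z = x + iy`. -/
noncomputable def Theta {k : ℕ} (f : E k → ℂ) (z : ℂ) (φ : ℝ) (ξ : E k × E k) : ℂ :=
  ((z.im ^ ((k : ℝ) / 4) : ℝ) : ℂ) *
    ∑' n : Fin k → ℤ,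
      fphi f φ (Real.sqrt z.im • (intVec n - ξ.2)) *
        e ((1 / 2) * ‖intVec n - ξ.2‖ ^ 2 * z.re + ⟪intVec n, ξ.1⟫)

/-- The vector `s = (½,…,½) ∈ ℝ^k`. -/
noncomputable def halfVec (k : ℕ) : E k :=
  (EuclideanSpace.equiv (Fin k) ℝ).symm (fun _ => (1 / 2 : ℝ))

private lemma e_add (a b : ℝ) : e (a + b) = e a * e b := by
  rw [e, e, e, ← Complex.exp_add]
  push_cast
  ring_nf

private lemma e_int (m : ℤ) : e (m : ℝ) = 1 := by
  rw [e, show (2 * Real.pi * Complex.I * ((m : ℝ) : ℂ)) = (m : ℂ) * (2 * Real.pi * Complex.I) by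
    push_cast; ring]
  exact Complex.exp_int_mul_two_pi_mul_I m

private lemma abs_e (t : ℝ) : ‖e t‖ = 1 := by
  rw [e, show (2 * Real.pi * Complex.I * (t : ℂ)) = ((2 * Real.pi * t : ℝ) : ℂ) * Complex.I by
    push_cast; ring]
  exact Complex.norm_exp_ofReal_mul_I _

/-- `|Θ_f|` is invariant under `ρ₂ = (n₁; (s, 0))` with `s = (½,…,½)`:
`|Θ_f(z + 1, φ; (ξ₁ + ξ₂ + s, ξ₂))| = |Θ_f(z, φ; (ξ₁, ξ₂))|`. -/
theorem theta_invariance_rho2 {k : ℕ} (hk : 0 < k)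
    (f : E k → ℂ) (hf : Measurable f)
    (η : ℝ) (hη : (k : ℝ) < η) (hκ : kappa η f < ⊤)
    (z : ℂ) (hz : 0 < z.im) (φ : ℝ) (ξ₁ ξ₂ : E k) :
    ‖Theta f (z + 1) φ (ξ₁ + ξ₂ + halfVec k, ξ₂)‖ =
      ‖Theta f z φ (ξ₁, ξ₂)‖ := by
  have key : Theta f (z + 1) φ (ξ₁ + ξ₂ + halfVec k, ξ₂)
      = e ((1 / 2) * ‖ξ₂‖ ^ 2) * Theta f z φ (ξ₁, ξ₂) := by
    unfold Theta
    simp only [Complex.add_im, Complex.one_im, add_zero, Complex.add_re, Complex.one_re]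
    rw [mul_left_comm]
    congr 1
    rw [← tsum_mul_left]
    apply tsum_congr
    intro n
    set m : E k := intVec n with hm
    have hterm : e ((1 / 2) * ‖m - ξ₂‖ ^ 2 * (z.re + 1) + ⟪m, ξ₁ + ξ₂ + halfVec k⟫)
        = e ((1 / 2) * ‖ξ₂‖ ^ 2) * e ((1 / 2) * ‖m - ξ₂‖ ^ 2 * z.re + ⟪m, ξ₁⟫) := by
      obtain ⟨N, hN⟩ : ∃ N : ℤ, (1 / 2 : ℝ) * ‖m‖ ^ 2 + ⟪m, halfVec k⟫ = (N : ℝ) := by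
        have hS : (2 : ℤ) ∣ ∑ i, (n i ^ 2 + n i) := by
          refine Finset.dvd_sum fun i _ => ?_
          have : Even (n i * (n i + 1)) := Int.even_mul_succ_self (n i)
          rcases this with ⟨r, hr⟩
          exact ⟨r, by linarith [hr]⟩
        obtain ⟨N, hNS⟩ := hS
        refine ⟨N, ?_⟩
        have h1 : ‖m‖ ^ 2 = ∑ i, ((n i : ℝ)) * ((n i : ℝ)) := by
          rw [← real_inner_self_eq_norm_sq, hm]
          simp [intVec, PiLp.inner_apply, EuclideanSpace.equiv, RCLike.inner_apply]
          rw [EuclideanSpace.norm_sq_eq]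
          simp only [PiLp.toLp_apply, Real.norm_eq_abs, sq, abs_mul_abs_self]
        have h2 : ⟪m, halfVec k⟫ = ∑ i, ((n i : ℝ)) * (1 / 2) := by
          rw [hm]
          simp [intVec, halfVec, PiLp.inner_apply, EuclideanSpace.equiv, RCLike.inner_apply]
          exact Finset.sum_congr rfl fun i _ => by ring
        have h3 : ((∑ i, (n i ^ 2 + n i) : ℤ) : ℝ) = ((2 * N : ℤ) : ℝ) := by rw [hNS]
        push_cast at h3
        rw [h1, h2]
        calc (1 / 2 : ℝ) * (∑ i, ((n i : ℝ)) * ((n i : ℝ))) + ∑ i, ((n i : ℝ)) * (1 / 2)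
            = (1 / 2) * ∑ i, ((n i : ℝ) ^ 2 + (n i : ℝ)) := by
              rw [Finset.mul_sum, Finset.mul_sum, ← Finset.sum_add_distrib]
              exact Finset.sum_congr rfl fun i _ => by ring
          _ = (N : ℝ) := by rw [h3]; ring
      have hexp : (1 / 2 : ℝ) * ‖m - ξ₂‖ ^ 2 * (z.re + 1) + ⟪m, ξ₁ + ξ₂ + halfVec k⟫
          = ((1 / 2) * ‖ξ₂‖ ^ 2 + ((1 / 2) * ‖m - ξ₂‖ ^ 2 * z.re + ⟪m, ξ₁⟫)) + (N : ℝ) := by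
        rw [inner_add_right, inner_add_right, ← hN,
          show ‖m - ξ₂‖ ^ 2 = ‖m‖ ^ 2 - 2 * ⟪m, ξ₂⟫ + ‖ξ₂‖ ^ 2 by
            rw [norm_sub_sq_real]]
        ring
      rw [hexp, e_add, e_int, mul_one, e_add]
    rw [hterm]
    ring
  rw [key, norm_mul, abs_e, one_mul]
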